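/- arXiv:2404.19078 — 3 statements merged into one kernel-verified Lean document; each statement's English description precedes it below -/
import Mathlib

section
/- With t(d,m) ∈ ℤ[q] the generating polynomial of basal P_{3,2}-partitions with smallest part 3, d parts, and largest part m, for all n ≥ 2 and all d ≥ 1 the following identity holds (with the convention t(e,m) = 0 for e ≤ 0): t(d, 3n+2) = q^{3n+3}·t(d−1, 3n−1) + q^{6n+2}·(1 + q + q²)·t(d−2, 3n−1) + q^{9n+3}·t(d−3, 3n−1). -/
/-- A basal `P_{3,2}`-partition with smallest part `3`, recorded as the strictly
increasing list of its parts: the first part is `3`, and each later part `b`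
exceeds the previous part `a` by at most `3` if `3 ∣ b` and by at most `2`
otherwise. -/
def IsBasalP32 (l : List ℕ) : Prop :=
  l.head? = some 3 ∧
    l.Chain' (fun a b => a < b ∧ b - a ≤ if b % 3 = 0 then 3 else 2)

open Classical Polynomial in
/-- `t d m ∈ ℤ[q]` is the generating polynomial `∑_b q^{|b|}` of basal
`P_{3,2}`-partitions with smallest part `3`, exactly `d` parts, and largest
part `m` (all parts of such a partition are `≤ m`, so it is encoded exactly
once as a function `Fin d → Fin (m+1)`); in particular `t 0 m = 0`. -/
noncomputable def t (d m : ℕ) : Polynomial ℤ :=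
  ∑ f : Fin d → Fin (m + 1),
    if IsBasalP32 (List.ofFn fun i => (f i : ℕ)) ∧
        (List.ofFn fun i => (f i : ℕ)).getLast? = some m
    then X ^ (List.ofFn fun i => (f i : ℕ)).sum
    else 0

open Polynomial Finset

/-- elements of a `<`-chain are at most the last element -/
lemma chain_le_getLast : ∀ {l : List ℕ} {b x : ℕ}, l.Chain' (· < ·) →
    l.getLast? = some b → x ∈ l → x ≤ b := by
  intro l
  induction l with
  | nil => intro b x _ _ hx; simp at hx
  | cons a l ih =>
    intro b x hc hb hx
    cases l with
    | nil =>
      simp at hb hx; omega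
    | cons c l2 =>
      rw [List.getLast?_cons_cons] at hb
      simp only [List.Chain'] at hc; rw [List.isChain_cons_cons] at hc
      rcases List.mem_cons.1 hx with rfl | hx
      · have := ih hc.2 hb List.mem_cons_self
        omega
      · exact ih hc.2 hb hx

lemma basal_chain_lt {l : List ℕ} (h : IsBasalP32 l) : l.Chain' (· < ·) :=
  h.2.imp (fun a b hh => hh.1)

open Classical in
noncomputable def SB (d m : ℕ) : Finset (List ℕ) :=
  (((Finset.univ : Finset (Fin d → Fin (m+1))).image
      fun f => List.ofFn fun i => ((f i : ℕ))).filter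
    (fun l => IsBasalP32 l ∧ l.getLast? = some m))

lemma mem_SB {d m : ℕ} {l : List ℕ} :
    l ∈ SB d m ↔ l.length = d ∧ IsBasalP32 l ∧ l.getLast? = some m := by
  classical
  rw [SB, Finset.mem_filter]
  constructor
  · rintro ⟨hl, h⟩
    refine ⟨?_, h⟩
    obtain ⟨f, -, rfl⟩ := Finset.mem_image.1 hl
    simp
  · rintro ⟨hlen, h⟩
    refine ⟨?_, h⟩
    have hle : ∀ x ∈ l, x ≤ m := fun x hx =>
      chain_le_getLast (basal_chain_lt h.1) h.2 hx
    subst hlen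
    refine Finset.mem_image.2 ⟨fun i => ⟨l.get i, ?_⟩, Finset.mem_univ _, ?_⟩
    · exact Nat.lt_succ_of_le (hle _ (l.get_mem _))
    · simp [List.ofFn_get]

open Classical in
lemma t_eq (d m : ℕ) : t d m = ∑ l ∈ SB d m, X ^ l.sum := by
  classical
  rw [t, SB, Finset.sum_filter]
  rw [Finset.sum_image]
  intro f _ g _ h
  have : (fun i => ((f i : ℕ))) = fun i => ((g i : ℕ)) := List.ofFn_injective h
  funext i
  exact Fin.ext (congrFun this i)

lemma t_zero (m : ℕ) : t 0 m = 0 := by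
  rw [t_eq]
  have : SB 0 m = ∅ := by
    ext l
    simp only [mem_SB, Finset.notMem_empty, iff_false]
    rintro ⟨hlen, -, hlast⟩
    rw [List.length_eq_zero_iff] at hlen
    subst hlen
    simp at hlast
  simp [this]

lemma SB_disjoint {e a b : ℕ} (h : a ≠ b) : Disjoint (SB e a) (SB e b) := by
  rw [Finset.disjoint_left]
  intro l hla hlb
  have h1 := (mem_SB.1 hla).2.2
  have h2 := (mem_SB.1 hlb).2.2
  rw [h1] at h2
  exact h (Option.some_injective _ h2)

open Classical in
lemma SB_succ (e m : ℕ) (hm : 4 ≤ m) :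
    SB (e+1) m =
      ((SB e (m-1) ∪ SB e (m-2)) ∪ (if m % 3 = 0 then SB e (m-3) else ∅)).image
        (fun l => l ++ [m]) := by
  ext l
  simp only [Finset.mem_image, Finset.mem_union]
  constructor
  · intro hl
    obtain ⟨hlen, ⟨hhead, hchain⟩, hlast⟩ := mem_SB.1 hl
    have hne : l ≠ [] := by intro h; subst h; simp at hlen
    have hgl : l.getLast hne = m := by
      rwa [List.getLast?_eq_getLast hne, Option.some_inj] at hlast
    have hsplit : l.dropLast ++ [m] = l := by
      rw [← hgl]; exact List.dropLast_append_getLast hne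
    set l' := l.dropLast with hl'
    have hne' : l' ≠ [] := by
      intro h
      rw [h] at hsplit
      rw [← hsplit] at hhead
      simp at hhead
      omega
    refine ⟨l', ?_, hsplit⟩
    rw [← hsplit] at hchain hhead
    simp only [List.Chain'] at hchain; rw [List.isChain_append] at hchain
    obtain ⟨hc1, -, hrel⟩ := hchain
    have hk := hrel (l'.getLast hne') (List.getLast?_eq_getLast hne') m rfl
    have hhead' : l'.head? = some 3 := by
      rwa [List.head?_append_of_ne_nil _ hne'] at hhead
    have hlen' : l'.length = e := by
      have := congrArg List.length hsplit
      simp at this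
      omega
    have hmem : ∀ m', l'.getLast hne' = m' → l' ∈ SB e m' := by
      intro m' hm'
      exact mem_SB.2 ⟨hlen', ⟨hhead', hc1⟩, by rw [List.getLast?_eq_getLast hne', hm']⟩
    by_cases h3 : m % 3 = 0
    · rw [if_pos h3] at hk ⊢
      have : l'.getLast hne' = m - 1 ∨ l'.getLast hne' = m - 2 ∨ l'.getLast hne' = m - 3 := by
        omega
      rcases this with h | h | h
      · exact Or.inl (Or.inl (hmem _ h))
      · exact Or.inl (Or.inr (hmem _ h))
      · exact Or.inr (hmem _ h)
    · rw [if_neg h3] at hk ⊢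
      have : l'.getLast hne' = m - 1 ∨ l'.getLast hne' = m - 2 := by omega
      rcases this with h | h
      · exact Or.inl (Or.inl (hmem _ h))
      · exact Or.inl (Or.inr (hmem _ h))
  · rintro ⟨l', hl', rfl⟩
    have key : ∀ m', l' ∈ SB e m' → (m' < m ∧ m - m' ≤ if m % 3 = 0 then 3 else 2) →
        l' ++ [m] ∈ SB (e+1) m := by
      intro m' hmem hrel
      obtain ⟨hlen, ⟨hhead, hchain⟩, hlast⟩ := mem_SB.1 hmem
      have hne' : l' ≠ [] := by
        intro h; subst h; simp at hlast
      refine mem_SB.2 ⟨by simp [hlen], ⟨?_, ?_⟩, ?_⟩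
      · rwa [List.head?_append_of_ne_nil _ hne']
      · simp only [List.Chain']; rw [List.isChain_append]
        refine ⟨hchain, List.isChain_singleton _, ?_⟩
        intro x hx y hy
        rw [hlast] at hx
        simp only [Option.mem_def, Option.some_inj] at hx hy
        simp only [List.head?_cons, Option.some_inj] at hy
        subst hx; subst hy
        exact hrel
      · simp
    have h2 : 2 ≤ if m % 3 = 0 then 3 else 2 := by split <;> omega
    rcases hl' with (h | h) | h
    · exact key _ h ⟨by omega, by omega⟩
    · exact key _ h ⟨by omega, by omega⟩
    · rcases Classical.em (m % 3 = 0) with h3 | h3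
      · rw [if_pos h3] at h
        exact key _ h ⟨by omega, by rw [if_pos h3]; omega⟩
      · rw [if_neg h3] at h
        simp at h

open Classical in
lemma t_rec (e m : ℕ) (hm : 4 ≤ m) :
    t (e+1) m =
      X ^ m * (t e (m-1) + t e (m-2) + if m % 3 = 0 then t e (m-3) else 0) := by
  classical
  rw [t_eq, SB_succ e m hm,
    Finset.sum_image (fun a _ b _ h => List.append_left_injective _ h)]
  have hsum : ∀ l' : List ℕ, (X : Polynomial ℤ) ^ (l' ++ [m]).sum = X ^ m * X ^ l'.sum := by
    intro l'
    rw [List.sum_append, List.sum_singleton, pow_add, mul_comm]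
  rw [Finset.sum_congr rfl (fun l _ => hsum l), ← Finset.mul_sum]
  congr 1
  have d12 : Disjoint (SB e (m-1)) (SB e (m-2)) := SB_disjoint (by omega)
  by_cases h3 : m % 3 = 0
  · rw [if_pos h3, if_pos h3]
    have d13 : Disjoint (SB e (m-1) ∪ SB e (m-2)) (SB e (m-3)) := by
      rw [Finset.disjoint_union_left]
      exact ⟨SB_disjoint (by omega), SB_disjoint (by omega)⟩
    rw [Finset.sum_union d13, Finset.sum_union d12, ← t_eq, ← t_eq, ← t_eq]
  · rw [if_neg h3, if_neg h3, Finset.union_empty, Finset.sum_union d12,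
      ← t_eq, ← t_eq, add_zero]

lemma t_one (m : ℕ) (hm : 4 ≤ m) : t 1 m = 0 := by
  rw [show (1:ℕ) = 0 + 1 from rfl, t_rec 0 m hm, t_zero, t_zero, t_zero]
  simp

lemma t_rec2 (e a : ℕ) (h4 : 4 ≤ a) (h3 : a % 3 ≠ 0) :
    t (e+1) a = X ^ a * (t e (a-1) + t e (a-2)) := by
  rw [t_rec e a h4, if_neg h3, add_zero]

lemma t_rec3 (e a : ℕ) (h4 : 4 ≤ a) (h3 : a % 3 = 0) :
    t (e+1) a = X ^ a * (t e (a-1) + t e (a-2) + t e (a-3)) := by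
  rw [t_rec e a h4, if_pos h3]


open Polynomial in
/-- For all `n ≥ 2` and `d ≥ 1` (with the convention `t e m = 0` for `e ≤ 0`):
`t(d, 3n+2) = q^{3n+3}·t(d−1, 3n−1) + q^{6n+2}·(1+q+q²)·t(d−2, 3n−1) + q^{9n+3}·t(d−3, 3n−1)`. -/
theorem t_third_order_recursion :
    ∀ n d : ℕ, 2 ≤ n → 1 ≤ d →
      t d (3 * n + 2) =
        X ^ (3 * n + 3) * t (d - 1) (3 * n - 1) +
          X ^ (6 * n + 2) * (1 + X + X ^ 2) * t (d - 2) (3 * n - 1) +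
          X ^ (9 * n + 3) * t (d - 3) (3 * n - 1) := by
  intro n d hn hd
  obtain ⟨p, rfl⟩ : ∃ p, n = p + 2 := ⟨n - 2, by omega⟩
  rw [show 3 * (p+2) + 2 = 3*p+8 from by ring, show 3 * (p+2) - 1 = 3*p+5 from by omega,
    show 3 * (p+2) + 3 = 3*p+9 from by ring, show 6 * (p+2) + 2 = 6*p+14 from by ring,
    show 9 * (p+2) + 3 = 9*p+21 from by ring]
  by_cases h1 : d = 1
  · subst h1
    rw [t_one _ (by omega)]
    simp [t_zero]
  by_cases h2 : d = 2
  · subst h2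
    rw [show (2:ℕ)-1 = 1 from rfl,
      show (2:ℕ) = 1+1 from rfl, t_rec2 1 (3*p+8) (by omega) (by omega),
      show 3*p+8-1 = 3*p+7 from by omega, show 3*p+8-2 = 3*p+6 from by omega,
      t_one _ (by omega), t_one _ (by omega), t_one _ (by omega)]
    simp [t_zero]
  obtain ⟨g, rfl⟩ : ∃ g, d = g + 3 := ⟨d - 3, by omega⟩
  rw [show g+3-1 = g+2 from rfl, show g+3-2 = g+1 from rfl, show g+3-3 = g from rfl,
    show g+3 = (g+2)+1 from rfl,
    t_rec2 (g+2) (3*p+8) (by omega) (by omega),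
    show 3*p+8-1 = 3*p+7 from by omega, show 3*p+8-2 = 3*p+6 from by omega,
    show g+2 = (g+1)+1 from rfl,
    t_rec2 (g+1) (3*p+7) (by omega) (by omega),
    show 3*p+7-1 = 3*p+6 from by omega, show 3*p+7-2 = 3*p+5 from by omega,
    t_rec3 (g+1) (3*p+6) (by omega) (by omega),
    show 3*p+6-1 = 3*p+5 from by omega, show 3*p+6-2 = 3*p+4 from by omega,
    show 3*p+6-3 = 3*p+3 from by omega,
    t_rec2 (g+1) (3*p+5) (by omega) (by omega),
    show 3*p+5-1 = 3*p+4 from by omega, show 3*p+5-2 = 3*p+3 from by omega,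
    t_rec3 g (3*p+6) (by omega) (by omega),
    t_rec2 g (3*p+5) (by omega) (by omega),
    show 3*p+6-1 = 3*p+5 from by omega, show 3*p+6-2 = 3*p+4 from by omega,
    show 3*p+6-3 = 3*p+3 from by omega,
    show 3*p+5-1 = 3*p+4 from by omega, show 3*p+5-2 = 3*p+3 from by omega]
  ring
end

section
/- With t(d,m) ∈ ℤ[q] the generating polynomial of basal P_{3,2}-partitions with smallest part 3, d parts, and largest part m, for every n ≥ 1 the following identity holds in the polynomial ring ℤ[q,z]: ∑_{d≥1} t(d, 3n+2)·z^d = (q⁸ z² + q¹² z³) · ∏_{i=2}^{n} (q^{3i+3} z + q^{6i+2}(1 + q + q²) z² + q^{9i+3} z³), where the left-hand sum has finitely many nonzero terms. -/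
/-- All basal partitions with largest part `m`, as a list. -/
def Pl : ℕ → List (List ℕ)
  | 0 => [] | 1 => [] | 2 => [] | 3 => [[3]]
  | (m+4) =>
    ((Pl (m+3) ++ Pl (m+2) ++ if (m+4) % 3 = 0 then Pl (m+1) else []).map
      (fun l => l ++ [m+4]))

lemma basal_ne_nil {l : List ℕ} (h : IsBasalP32 l) : l ≠ [] := by
  intro hl; rw [hl] at h; simp [IsBasalP32] at h

lemma basal_pairwise {l : List ℕ} (h : IsBasalP32 l) : l.Pairwise (· < ·) := by
  exact List.isChain_iff_pairwise.mp (h.2.imp (fun {_ _} hab => hab.1))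

lemma basal_mem_bounds {l : List ℕ} {m : ℕ} (h : IsBasalP32 l)
    (hm : l.getLast? = some m) : ∀ x ∈ l, 3 ≤ x ∧ x ≤ m := by
  have hp := basal_pairwise h
  obtain ⟨a, l', rfl⟩ : ∃ a l', l = a :: l' := by
    cases l with
    | nil => exact absurd rfl (basal_ne_nil h)
    | cons a l' => exact ⟨a, l', rfl⟩
  have ha : a = 3 := by
    have := h.1; simp at this; omega
  subst ha
  -- upper bound: write l as dropLast ++ [getLast]
  have hne : (3 :: l') ≠ [] := by simp
  have hlast : (3 :: l').getLast hne = m := by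
    rwa [List.getLast?_eq_getLast hne, Option.some_inj] at hm
  have hdec : (3 :: l').dropLast ++ [m] = 3 :: l' := by
    rw [← hlast]; exact List.dropLast_append_getLast hne
  intro x hx
  constructor
  · rcases List.mem_cons.mp hx with rfl | hx'
    · exact le_refl 3
    · exact le_of_lt (List.rel_of_pairwise_cons hp hx')
  · rw [← hdec] at hx hp
    rcases List.mem_append.mp hx with hx' | hx'
    · have := List.pairwise_append.mp hp
      exact le_of_lt (this.2.2 x hx' m (by simp))
    · simp at hx'; omega

lemma basal_length_le {l : List ℕ} {m : ℕ} (h : IsBasalP32 l)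
    (hm : l.getLast? = some m) : l.length + 2 ≤ m := by
  have hnd : l.Nodup := (basal_pairwise h).nodup
  have hsub : l.toFinset ⊆ Finset.Icc 3 m := by
    intro x hx
    rw [List.mem_toFinset] at hx
    rcases basal_mem_bounds h hm x hx with ⟨h1, h2⟩
    exact Finset.mem_Icc.mpr ⟨h1, h2⟩
  have := Finset.card_le_card hsub
  rw [List.toFinset_card_of_nodup hnd, Nat.card_Icc] at this
  have h3 : 3 ≤ m := by
    have hne := basal_ne_nil h
    have : m ∈ l := by
      rw [List.getLast?_eq_getLast hne, Option.some_inj] at hm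
      rw [← hm]; exact List.getLast_mem hne
    exact (basal_mem_bounds h hm m this).1
  have h1 : 1 ≤ l.length := by
    cases l with
    | nil => exact absurd rfl (basal_ne_nil h)
    | cons a l' => simp
  omega

lemma basal_append {l : List ℕ} {k m : ℕ} (h : IsBasalP32 l)
    (hk : l.getLast? = some k) (h1 : k < m)
    (h2 : m - k ≤ if m % 3 = 0 then 3 else 2) :
    IsBasalP32 (l ++ [m]) ∧ (l ++ [m]).getLast? = some m := by
  have hne := basal_ne_nil h
  refine ⟨⟨?_, ?_⟩, by simp⟩
  · rw [List.head?_append_of_ne_nil _ hne]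
    exact h.1
  · refine List.isChain_append.mpr ?_
    refine ⟨h.2, List.isChain_singleton m, ?_⟩
    intro x hx y hy
    simp at hy; subst hy
    rw [hk] at hx; simp at hx; subst hx
    exact ⟨h1, h2⟩

lemma basal_unappend {l : List ℕ} {m : ℕ} (h : IsBasalP32 (l ++ [m]))
    (hne : l ≠ []) :
    ∃ k, IsBasalP32 l ∧ l.getLast? = some k ∧ k < m ∧
      m - k ≤ if m % 3 = 0 then 3 else 2 := by
  obtain ⟨k, hk⟩ : ∃ k, l.getLast? = some k := by
    cases hl : l.getLast? with
    | none => exact absurd (List.getLast?_eq_none_iff.mp hl) hne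
    | some k => exact ⟨k, rfl⟩
  refine ⟨k, ⟨?_, ?_⟩, hk, ?_, ?_⟩
  · have := h.1; rwa [List.head?_append_of_ne_nil _ hne] at this
  · exact (List.isChain_append.mp h.2).1
  · have := (List.isChain_append.mp h.2).2.2 k (by rw [hk]; rfl) m (by simp)
    exact this.1
  · have := (List.isChain_append.mp h.2).2.2 k (by rw [hk]; rfl) m (by simp)
    exact this.2

lemma mem_Pl (m : ℕ) (l : List ℕ) :
    l ∈ Pl m ↔ IsBasalP32 l ∧ l.getLast? = some m := by
  induction m using Nat.strong_induction_on generalizing l with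
  | _ m ih =>
  have hsmall : ∀ m' l', (IsBasalP32 l' ∧ l'.getLast? = some m') → 3 ≤ m' := by
    rintro m' l' ⟨h1, h2⟩
    have hne := basal_ne_nil h1
    have hm : m' ∈ l' := by
      rw [List.getLast?_eq_getLast hne, Option.some_inj] at h2
      rw [← h2]; exact List.getLast_mem hne
    exact (basal_mem_bounds h1 h2 m' hm).1
  obtain _|_|_|_|m := m
  · simp only [Pl]; simp only [List.not_mem_nil, false_iff]
    intro h; have := hsmall 0 l h; omega
  · simp only [Pl]; simp only [List.not_mem_nil, false_iff]
    intro h; have := hsmall 1 l h; omega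
  · simp only [Pl]; simp only [List.not_mem_nil, false_iff]
    intro h; have := hsmall 2 l h; omega
  · simp only [Pl, List.mem_singleton]
    constructor
    · rintro rfl
      exact ⟨⟨rfl, List.isChain_singleton 3⟩, rfl⟩
    · rintro ⟨h1, h2⟩
      have hne := basal_ne_nil h1
      have hlast : l.getLast hne = 3 := by
        rwa [List.getLast?_eq_getLast hne, Option.some_inj] at h2
      have hdec : l.dropLast ++ [3] = l := by
        rw [← hlast]; exact List.dropLast_append_getLast hne
      rcases eq_or_ne l.dropLast [] with hd | hd
      · rw [← hdec, hd]; rfl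
      · exfalso
        rw [← hdec] at h1
        obtain ⟨k, hb, hk, hlt, _⟩ := basal_unappend h1 hd
        have := hsmall k _ ⟨hb, hk⟩
        omega
  · rw [Pl, List.mem_map]
    constructor
    · rintro ⟨l', hl', rfl⟩
      simp only [List.mem_append] at hl'
      rcases hl' with (hl' | hl') | hl'
      · obtain ⟨h1, h2⟩ := (ih (m+3) (by omega) l').mp hl'
        exact basal_append h1 h2 (by omega) (by split <;> omega)
      · obtain ⟨h1, h2⟩ := (ih (m+2) (by omega) l').mp hl'
        exact basal_append h1 h2 (by omega) (by split <;> omega)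
      · split at hl'
        · next h3 =>
          obtain ⟨h1, h2⟩ := (ih (m+1) (by omega) l').mp hl'
          exact basal_append h1 h2 (by omega) (by rw [if_pos h3]; omega)
        · simp at hl'
    · rintro ⟨h1, h2⟩
      have hne := basal_ne_nil h1
      have hlast : l.getLast hne = m + 4 := by
        rwa [List.getLast?_eq_getLast hne, Option.some_inj] at h2
      have hdec : l.dropLast ++ [m+4] = l := by
        rw [← hlast]; exact List.dropLast_append_getLast hne
      have hd : l.dropLast ≠ [] := by
        intro hd
        have : l = [m+4] := by rw [← hdec, hd]; rfl
        rw [this] at h1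
        have := h1.1; simp at this
      rw [← hdec] at h1
      obtain ⟨k, hb, hk, hlt, hdiff⟩ := basal_unappend h1 hd
      have hk3 := hsmall k _ ⟨hb, hk⟩
      refine ⟨l.dropLast, ?_, hdec⟩
      simp only [List.mem_append]
      have hmem : ∀ j, j < m + 4 → l.dropLast.getLast? = some j →
          l.dropLast ∈ Pl j := fun j hj hj' => (ih j hj _).mpr ⟨hb, hj'⟩
      rcases Nat.lt_or_ge k (m+2) with hcase | hcase
      · -- k ≤ m+1, so diff ≥ 3, forces 3 ∣ m+4 and k = m+1
        have h3 : (m+4) % 3 = 0 := by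
          by_contra h3
          rw [if_neg h3] at hdiff; omega
        have : k = m + 1 := by
          rw [if_pos h3] at hdiff; omega
        subst this
        right; rw [if_pos h3]; exact hmem _ (by omega) hk
      · rcases Nat.lt_or_ge k (m+3) with hc2 | hc2
        · left; right; have : k = m+2 := by omega
          subst this; exact hmem _ (by omega) hk
        · left; left; have : k = m+3 := by omega
          subst this; exact hmem _ (by omega) hk

lemma getLast_of_mem_Pl {m : ℕ} {l : List ℕ} (h : l ∈ Pl m) :
    l.getLast? = some m := ((mem_Pl m l).mp h).2

lemma nodup_Pl (m : ℕ) : (Pl m).Nodup := by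
  induction m using Nat.strong_induction_on with
  | _ m ih =>
  obtain _|_|_|_|m := m
  · simp [Pl]
  · simp [Pl]
  · simp [Pl]
  · simp [Pl]
  · rw [Pl]
    apply List.Nodup.map
    · intro a b hab
      simpa using List.append_inj_left' hab rfl
    · have hdisj : ∀ i j : ℕ, i ≠ j → (Pl i).Disjoint (Pl j) := by
        intro i j hij l hi hj
        have := getLast_of_mem_Pl hi
        rw [getLast_of_mem_Pl hj] at this
        simp at this; omega
      refine List.Nodup.append (List.Nodup.append ?_ ?_ ?_) ?_ ?_
      · exact ih _ (by omega)
      · exact ih _ (by omega)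
      · exact hdisj _ _ (by omega)
      · split
        · exact ih _ (by omega)
        · simp
      · intro l hl hl'
        split at hl'
        · rcases List.mem_append.mp hl with h1 | h1
          · exact hdisj _ _ (by omega : m+3 ≠ m+1) h1 hl'
          · exact hdisj _ _ (by omega : m+2 ≠ m+1) h1 hl'
        · simp at hl'


open Polynomial

lemma t_eq_s16 (d m : ℕ) : t d m =
    (((Pl m).filter (fun l => l.length = d)).map
      (fun l => (X : Polynomial ℤ) ^ l.sum)).sum := by
  classical
  have hnd : ((Pl m).filter (fun l => l.length = d)).Nodup :=
    (nodup_Pl m).filter _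
  rw [t, ← List.sum_toFinset _ hnd]
  rw [show (Finset.univ : Finset (Fin d → Fin (m+1))).sum
      (fun f => if IsBasalP32 (List.ofFn fun i => (f i : ℕ)) ∧
        (List.ofFn fun i => (f i : ℕ)).getLast? = some m
      then (X : Polynomial ℤ) ^ (List.ofFn fun i => (f i : ℕ)).sum else 0) =
      ∑ f ∈ Finset.univ.filter (fun f : Fin d → Fin (m+1) =>
        IsBasalP32 (List.ofFn fun i => (f i : ℕ)) ∧
        (List.ofFn fun i => (f i : ℕ)).getLast? = some m),
        (X : Polynomial ℤ) ^ (List.ofFn fun i => (f i : ℕ)).sum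
    from (Finset.sum_filter _ _).symm]
  refine Finset.sum_bij (fun f _ => List.ofFn fun i => ((f i : ℕ))) ?_ ?_ ?_ ?_
  · intro f hf
    rw [Finset.mem_filter] at hf
    rw [List.mem_toFinset, List.mem_filter]
    constructor
    · exact (mem_Pl m _).mpr hf.2
    · simp
  · intro f₁ h₁ f₂ h₂ he
    have := List.ofFn_injective he
    funext i
    exact Fin.ext (congrFun this i)
  · intro l hl
    rw [List.mem_toFinset, List.mem_filter] at hl
    obtain ⟨hmem, hlen⟩ := hl
    have hlen' : l.length = d := by simpa using hlen
    subst hlen'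
    obtain ⟨hb, hla⟩ := (mem_Pl m l).mp hmem
    have hbd : ∀ i : Fin l.length, l.get i < m + 1 := by
      intro i
      have := (basal_mem_bounds hb hla (l.get i) (l.get_mem i)).2
      omega
    refine ⟨fun i => ⟨l.get i, hbd i⟩, ?_, ?_⟩
    · have hofn : (List.ofFn fun i => ((⟨l.get i, hbd i⟩ : Fin (m+1)) : ℕ)) = l := by
        simpa using List.ofFn_get l
      rw [Finset.mem_filter]
      refine ⟨Finset.mem_univ _, ?_⟩
      rw [hofn]; exact ⟨hb, hla⟩
    · simpa using List.ofFn_get l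
  · intro f hf
    rfl

noncomputable def U (m : ℕ) : Polynomial (Polynomial ℤ) :=
  ((Pl m).map (fun l => C ((X : Polynomial ℤ) ^ l.sum) * X ^ l.length)).sum

lemma sum_map_const_len {d : ℕ} : ∀ (L : List (List ℕ)),
    (∀ l ∈ L, l.length = d) →
    (L.map (fun l => C ((X : Polynomial ℤ) ^ l.sum) * X ^ l.length)).sum =
      C ((L.map (fun l => (X : Polynomial ℤ) ^ l.sum)).sum) * X ^ d
  | [], _ => by simp
  | a :: L, h => by
    have ha : a.length = d := h a (by simp)
    rw [List.map_cons, List.map_cons, List.sum_cons, List.sum_cons, map_add,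
      add_mul, ha, sum_map_const_len L (fun l hl => h l (by simp [hl]))]

lemma Ct_eq (d m : ℕ) :
    (C (t d m) * X ^ d : Polynomial (Polynomial ℤ)) =
      (((Pl m).filter (fun l => l.length = d)).map
        (fun l => C ((X : Polynomial ℤ) ^ l.sum) * X ^ l.length)).sum := by
  rw [t_eq_s16, sum_map_const_len _ (fun l hl => by simpa using (List.mem_filter.mp hl).2)]

lemma sum_group {α : Type*} [AddCommMonoid α] (M : ℕ) (g : List ℕ → α) :
    ∀ (L : List (List ℕ)), (∀ l ∈ L, l.length ∈ Finset.Icc 1 M) →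
    (L.map g).sum =
      ∑ d ∈ Finset.Icc 1 M, ((L.filter (fun l => l.length = d)).map g).sum
  | [], _ => by simp
  | a :: L, h => by
    rw [List.map_cons, List.sum_cons,
      sum_group M g L (fun l hl => h l (by simp [hl]))]
    have ha := h a (by simp)
    have step : ∀ d ∈ Finset.Icc 1 M,
        ((List.filter (fun l => decide (l.length = d)) (a :: L)).map g).sum =
        (if a.length = d then g a else 0) +
          ((List.filter (fun l => decide (l.length = d)) L).map g).sum := by
      intro d _
      by_cases had : a.length = d
      · rw [List.filter_cons_of_pos (by simp [had]), List.map_cons,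
          List.sum_cons, if_pos had]
      · rw [List.filter_cons_of_neg (by simp [had]), if_neg had, zero_add]
    rw [Finset.sum_congr rfl step, Finset.sum_add_distrib,
      Finset.sum_ite_eq (Finset.Icc 1 M) a.length (fun _ => g a), if_pos ha]

lemma U_eq (m M : ℕ) (hM : m ≤ M + 2) :
    U m = ∑ d ∈ Finset.Icc 1 M, (C (t d m) * X ^ d : Polynomial (Polynomial ℤ)) := by
  rw [U, sum_group M _ (Pl m) ?_]
  · exact Finset.sum_congr rfl fun d _ => (Ct_eq d m).symm
  · intro l hl
    obtain ⟨hb, hla⟩ := (mem_Pl m l).mp hl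
    have h1 := basal_length_le hb hla
    have h2 : 1 ≤ l.length := by
      cases l with
      | nil => exact absurd rfl (basal_ne_nil hb)
      | cons a l' => simp
    rw [Finset.mem_Icc]; omega

lemma t_eq_zero {d m : ℕ} (h : m < d + 2) : t d m = 0 := by
  rw [t_eq_s16]
  have he : (Pl m).filter (fun l => l.length = d) = [] := by
    rw [List.filter_eq_nil_iff]
    intro l hl
    obtain ⟨hb, hla⟩ := (mem_Pl m l).mp hl
    have := basal_length_le hb hla
    simp only [decide_eq_true_eq]
    omega
  rw [he]; simp

lemma U_rec (m : ℕ) : U (m+4) = C ((X : Polynomial ℤ)^(m+4)) * X *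
    (U (m+3) + U (m+2) + if (m+4) % 3 = 0 then U (m+1) else 0) := by
  rw [U, Pl, List.map_map]
  have hfun : ((fun l : List ℕ => C ((X : Polynomial ℤ)^l.sum) * X^l.length) ∘
      (fun l => l ++ [m+4]))
      = fun l => C ((X : Polynomial ℤ)^(m+4)) * X * (C (X^l.sum) * X^l.length) := by
    funext l
    simp only [Function.comp_apply, List.sum_append, List.length_append,
      List.sum_cons, List.sum_nil, List.length_cons, List.length_nil, add_zero,
      pow_add, map_mul, pow_one]
    ring
  rw [hfun]
  have hml : ∀ (L : List (List ℕ)),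
      (L.map (fun l => C ((X : Polynomial ℤ)^(m+4)) * X * (C (X^l.sum) * X^l.length))).sum
      = C ((X : Polynomial ℤ)^(m+4)) * X *
        (L.map (fun l => C ((X : Polynomial ℤ)^l.sum) * X^l.length)).sum := by
    intro L
    induction L with
    | nil => simp
    | cons a L ihL => simp only [List.map_cons, List.sum_cons, ihL, mul_add]
  rw [List.map_append, List.map_append, List.sum_append, List.sum_append, hml, hml]
  split
  · rw [hml, U, U, U, mul_add, mul_add]
  · simp [hml, U, mul_add]

lemma U_five : U 5 = (C ((X : Polynomial ℤ) ^ 8) * X ^ 2 + C ((X : Polynomial ℤ) ^ 12) * X ^ 3) := by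
  have h4 : Pl 4 = [[3, 4]] := by norm_num [Pl]
  have h5 : Pl 5 = [[3, 4, 5], [3, 5]] := by norm_num [Pl, h4]
  rw [U, h5]
  norm_num
  ring

lemma U_step (k : ℕ) :
    U (3*k+8) = U (3*k+5) *
      (C ((X : Polynomial ℤ) ^ (3*(k+2)+3)) * X +
        C ((X : Polynomial ℤ) ^ (6*(k+2)+2) * (1 + X + X^2)) * X^2 +
        C ((X : Polynomial ℤ) ^ (9*(k+2)+3)) * X^3) := by
  have A : U (3*k+5) = C ((X : Polynomial ℤ)^(3*k+5)) * X * (U (3*k+4) + U (3*k+3)) := by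
    have h := U_rec (3*k+1)
    rw [show 3*k+1+4 = 3*k+5 by ring, show 3*k+1+3 = 3*k+4 by ring,
      show 3*k+1+2 = 3*k+3 by ring, if_neg (by omega), add_zero] at h
    exact h
  have B : U (3*k+6) = C ((X : Polynomial ℤ)^(3*k+6)) * X *
      (U (3*k+5) + (U (3*k+4) + U (3*k+3))) := by
    have h := U_rec (3*k+2)
    rw [show 3*k+2+4 = 3*k+6 by ring, show 3*k+2+3 = 3*k+5 by ring,
      show 3*k+2+2 = 3*k+4 by ring, show 3*k+2+1 = 3*k+3 by ring,
      if_pos (by omega), add_assoc] at h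
    exact h
  have hB : U (3*k+6) = (C ((X : Polynomial ℤ)^(3*k+6)) * X + C X) * U (3*k+5) := by
    rw [B, A]
    simp only [map_pow, mul_add]
    ring
  have hC : U (3*k+7) = C ((X : Polynomial ℤ)^(3*k+7)) * X * (U (3*k+6) + U (3*k+5)) := by
    have h := U_rec (3*k+3)
    rw [show 3*k+3+4 = 3*k+7 by ring, show 3*k+3+3 = 3*k+6 by ring,
      show 3*k+3+2 = 3*k+5 by ring, if_neg (by omega), add_zero] at h
    exact h
  have hD : U (3*k+8) = C ((X : Polynomial ℤ)^(3*k+8)) * X * (U (3*k+7) + U (3*k+6)) := by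
    have h := U_rec (3*k+4)
    rw [show 3*k+4+4 = 3*k+8 by ring, show 3*k+4+3 = 3*k+7 by ring,
      show 3*k+4+2 = 3*k+6 by ring, if_neg (by omega), add_zero] at h
    exact h
  rw [hD, hC, hB]
  simp only [map_pow, map_mul, map_add, map_one]
  ring

lemma U_prod : ∀ n : ℕ, 1 ≤ n → U (3*n+2) =
    (C ((X : Polynomial ℤ) ^ 8) * X ^ 2 + C ((X : Polynomial ℤ) ^ 12) * X ^ 3) *
      ∏ i ∈ Finset.Icc 2 n,
        (C ((X : Polynomial ℤ) ^ (3 * i + 3)) * X +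
          C ((X : Polynomial ℤ) ^ (6 * i + 2) * (1 + X + X ^ 2)) * X ^ 2 +
          C ((X : Polynomial ℤ) ^ (9 * i + 3)) * X ^ 3) := by
  intro n hn
  induction n, hn using Nat.le_induction with
  | base =>
    rw [show Finset.Icc 2 1 = ∅ from rfl, Finset.prod_empty, show 3*1+2 = 5 by norm_num, U_five, mul_one]
  | succ n hn ih =>
    obtain ⟨j, rfl⟩ : ∃ j, n = j + 1 := ⟨n - 1, by omega⟩
    have hstep := U_step j
    rw [show 3*((j+1)+1)+2 = 3*j+8 by ring, hstep,
      show 3*j+5 = 3*(j+1)+2 by ring, ih,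
      Finset.prod_Icc_succ_top (by omega : 2 ≤ (j+1)+1)]
    rw [show 3*(j+2)+3 = 3*((j+1)+1)+3 by ring, show 6*(j+2)+2 = 6*((j+1)+1)+2 by ring,
      show 9*(j+2)+3 = 9*((j+1)+1)+3 by ring]
    ring

open Polynomial in
/-- For every `n ≥ 1`, in `ℤ[q][z]` (with `z` the outer variable, `q` the inner
one): `∑_{d≥1} t(d, 3n+2)·z^d
  = (q⁸z² + q¹²z³)·∏_{i=2}^{n}(q^{3i+3}z + q^{6i+2}(1+q+q²)z² + q^{9i+3}z³)`;
the sum on the left has finitely many nonzero terms (indeed `t(d, 3n+2) = 0`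
for `d > 3n+2`), so it may be taken over `1 ≤ d ≤ 3n+2`. -/
theorem t_generating_product (n : ℕ) (hn : 1 ≤ n) :
    (∀ d : ℕ, 3 * n + 2 < d → t d (3 * n + 2) = 0) ∧
    ∑ d ∈ Finset.Icc 1 (3 * n + 2),
        (C (t d (3 * n + 2)) * X ^ d : Polynomial (Polynomial ℤ)) =
      (C ((X : Polynomial ℤ) ^ 8) * X ^ 2 + C ((X : Polynomial ℤ) ^ 12) * X ^ 3) *
        ∏ i ∈ Finset.Icc 2 n,
          (C ((X : Polynomial ℤ) ^ (3 * i + 3)) * X +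
            C ((X : Polynomial ℤ) ^ (6 * i + 2) * (1 + X + X ^ 2)) * X ^ 2 +
            C ((X : Polynomial ℤ) ^ (9 * i + 3)) * X ^ 3) := by
  constructor
  · intro d hd
    exact t_eq_zero (by omega)
  · rw [← U_eq (3*n+2) (3*n+2) (by omega)]
    exact U_prod n hn
end

section
/- For every n ≥ 1, the following identity holds in the polynomial ring ℤ[z]: ∑_{d≥1} N(d, 3n+2)·z^d = (z^{n+1} + z^{n+2})·(1 + 3z + z²)^{n−1}, where N(d, m) denotes the number of basal P_{3,2}-partitions with smallest part 3, exactly d parts, and largest part m, and the left-hand sum has finitely many nonzero terms. -/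
/-- `basalP32Count d m` is the number of basal `P_{3,2}`-partitions with
smallest part `3`, exactly `d` parts, and largest part `m`. -/
noncomputable def basalP32Count (d m : ℕ) : ℕ :=
  {l : List ℕ | IsBasalP32 l ∧ l.length = d ∧ l.getLast? = some m}.ncard

def basalLists : ℕ → ℕ → Finset (List ℕ)
  | 0, _ => ∅
  | 1, m => if m = 3 then {[3]} else ∅
  | (d+2), m =>
      ((basalLists (d+1) (m-1) ∪ basalLists (d+1) (m-2) ∪
        (if m % 3 = 0 then basalLists (d+1) (m-3) else ∅)).image (· ++ [m]))

lemma basalLists_empty : ∀ d m, m < d + 2 → basalLists d m = ∅ := by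
  intro d
  induction d using Nat.strong_induction_on with
  | _ d ih =>
    match d with
    | 0 => intro m h; rfl
    | 1 => intro m h; simp only [basalLists]; rw [if_neg (by omega)]
    | (d+2) =>
      intro m h
      simp only [basalLists]
      rw [ih (d+1) (by omega) (m-1) (by omega), ih (d+1) (by omega) (m-2) (by omega)]
      have : (if m % 3 = 0 then basalLists (d+1) (m-3) else ∅) = ∅ := by
        split
        · exact ih (d+1) (by omega) (m-3) (by omega)
        · rfl
      rw [this]
      simp

lemma mem_basalLists : ∀ d m (l : List ℕ),
    l ∈ basalLists d m ↔ IsBasalP32 l ∧ l.length = d ∧ l.getLast? = some m := by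
  intro d
  induction d using Nat.strong_induction_on with
  | _ d ih =>
    match d with
    | 0 =>
      intro m l
      simp only [basalLists, Finset.notMem_empty, false_iff]
      rintro ⟨⟨h1, _⟩, h2, _⟩
      rw [List.length_eq_zero_iff] at h2
      subst h2; simp at h1
    | 1 =>
      intro m l
      constructor
      · intro hl
        simp only [basalLists] at hl
        by_cases hm : m = 3
        · subst hm
          rw [if_pos rfl] at hl
          simp only [Finset.mem_singleton] at hl
          subst hl
          refine ⟨⟨rfl, ?_⟩, rfl, rfl⟩
          exact List.isChain_singleton _
        · rw [if_neg hm] at hl; simp at hl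
      · rintro ⟨⟨h1, _⟩, h2, h3⟩
        match l, h2 with
        | [x], _ =>
          simp only [List.head?] at h1
          simp only [List.getLast?] at h3
          obtain rfl : x = 3 := by injection h1
          obtain rfl : m = 3 := by
            simp at h3; omega
          simp [basalLists]
    | (d+2) =>
      intro m l
      have ihm := ih (d+1) (by omega)
      constructor
      · intro hl
        simp only [basalLists, Finset.mem_image] at hl
        obtain ⟨l', hl', rfl⟩ := hl
        -- determine which branch and the last value k of l'
        have hcases : ∃ k, l' ∈ basalLists (d+1) k ∧
            (k = m - 1 ∨ k = m - 2 ∨ (k = m - 3 ∧ m % 3 = 0)) := by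
          simp only [Finset.mem_union] at hl'
          rcases hl' with (h | h) | h
          · exact ⟨m - 1, h, Or.inl rfl⟩
          · exact ⟨m - 2, h, Or.inr (Or.inl rfl)⟩
          · by_cases h3 : m % 3 = 0
            · rw [if_pos h3] at h; exact ⟨m - 3, h, Or.inr (Or.inr ⟨rfl, h3⟩)⟩
            · rw [if_neg h3] at h; simp at h
          
        obtain ⟨k, hk, hkv⟩ := hcases
        have hk3 : d + 3 ≤ k := by
          by_contra hc
          rw [basalLists_empty (d+1) k (by omega)] at hk
          simp at hk
        obtain ⟨⟨hh, hc⟩, hlen, hlast⟩ := (ihm k l').1 hk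
        have hne : l' ≠ [] := by
          intro h; subst h; simp at hlen
        refine ⟨⟨?_, ?_⟩, ?_, ?_⟩
        · rw [List.head?_append_of_ne_nil _ hne]; exact hh
        · unfold List.Chain'; rw [List.isChain_append]
          refine ⟨hc, List.isChain_singleton _, ?_⟩
          intro x hx y hy
          rw [hlast] at hx
          simp only [Option.mem_def, Option.some_inj] at hx
          subst hx
          simp only [List.head?_cons, Option.mem_def, Option.some_inj] at hy
          subst hy
          constructor
          · omega
          · rcases hkv with rfl | rfl | ⟨rfl, h3⟩
            · split <;> omega
            · split <;> omega
            · rw [if_pos h3]; omega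
        · simp [hlen]
        · exact List.getLast?_concat
      · rintro ⟨⟨hh, hc⟩, hlen, hlast⟩
        have hne : l ≠ [] := by intro h; subst h; simp at hlen
        have hdec : l.dropLast ++ [l.getLast hne] = l := List.dropLast_append_getLast hne
        have hlv : l.getLast hne = m := by
          rw [List.getLast?_eq_getLast hne] at hlast
          injection hlast
        rw [hlv] at hdec
        set l' := l.dropLast with hl'
        have hne' : l' ≠ [] := by
          intro h
          rw [h] at hdec
          subst hdec
          simp at hlen
        rw [← hdec] at hc; unfold List.Chain' at hc; rw [List.isChain_append] at hc
        obtain ⟨hc', _, hrel⟩ := hc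
        set p := l'.getLast hne' with hpdef
        have hp : l'.getLast? = some p := List.getLast?_eq_getLast hne'
        have hrelp := hrel p (by rw [hp]; rfl) m rfl
        obtain ⟨hpm, hgap⟩ := hrelp
        have hh' : l'.head? = some 3 := by
          rw [← hdec, List.head?_append_of_ne_nil _ hne'] at hh; exact hh
        have hlen' : l'.length = d + 1 := by
          have := congrArg List.length hdec
          simp at this
          omega
        have hmem : l' ∈ basalLists (d+1) p := (ihm p l').2 ⟨⟨hh', hc'⟩, hlen', hp⟩
        simp only [basalLists, Finset.mem_image]
        refine ⟨l', ?_, hdec⟩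
        simp only [Finset.mem_union]
        by_cases h3 : m % 3 = 0
        · rw [if_pos h3] at hgap ⊢
          have : p = m - 1 ∨ p = m - 2 ∨ p = m - 3 := by omega
          rcases this with h | h | h
          · exact Or.inl (Or.inl (h ▸ hmem))
          · exact Or.inl (Or.inr (h ▸ hmem))
          · exact Or.inr (h ▸ hmem)
        · rw [if_neg h3] at hgap
          have : p = m - 1 ∨ p = m - 2 := by omega
          rcases this with h | h
          · exact Or.inl (Or.inl (h ▸ hmem))
          · exact Or.inl (Or.inr (h ▸ hmem))

lemma basalP32Count_eq (d m : ℕ) : basalP32Count d m = (basalLists d m).card := by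
  rw [basalP32Count, ← Set.ncard_coe_finset]
  congr 1
  ext l
  simp [mem_basalLists]

lemma basalLists_disjoint (d : ℕ) {k₁ k₂ : ℕ} (h : k₁ ≠ k₂) :
    Disjoint (basalLists d k₁) (basalLists d k₂) := by
  rw [Finset.disjoint_left]
  intro l h1 h2
  rw [mem_basalLists] at h1 h2
  exact h (by have := h1.2.2 ▸ h2.2.2; injection this)

lemma card_rec (d m : ℕ) (hm : 4 ≤ m) :
    (basalLists (d+2) m).card =
      (basalLists (d+1) (m-1)).card + (basalLists (d+1) (m-2)).card +
        (if m % 3 = 0 then (basalLists (d+1) (m-3)).card else 0) := by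
  have hinj : Function.Injective (· ++ [m] : List ℕ → List ℕ) :=
    List.append_left_injective [m]
  simp only [basalLists]
  rw [Finset.card_image_of_injective _ hinj]
  rw [Finset.card_union_of_disjoint, Finset.card_union_of_disjoint]
  · congr 1
    split
    · rfl
    · simp
  · exact basalLists_disjoint _ (by omega)
  · apply Finset.disjoint_union_left.2
    constructor
    · split
      · exact basalLists_disjoint _ (by omega)
      · simp
    · split
      · exact basalLists_disjoint _ (by omega)
      · simp

lemma cnt_rec (d m : ℕ) (hm : 4 ≤ m) :
    (basalLists (d+1) m).card =
      (basalLists d (m-1)).card + (basalLists d (m-2)).card +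
        (if m % 3 = 0 then (basalLists d (m-3)).card else 0) := by
  match d with
  | 0 =>
    have h1 : basalLists 1 m = ∅ := by
      simp only [basalLists]; rw [if_neg (by omega)]
    rw [h1]
    simp [basalLists]
  | (d+1) => exact card_rec d m hm

open Polynomial in
noncomputable def Gpoly (m : ℕ) : Polynomial ℤ :=
  ∑ d ∈ Finset.range (m+1), ((basalLists d m).card : Polynomial ℤ) * X ^ d

open Polynomial in
lemma Gpoly_ext (m M : ℕ) (h : m ≤ M) :
    Gpoly m = ∑ d ∈ Finset.range (M+1), ((basalLists d m).card : Polynomial ℤ) * X ^ d := by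
  rw [Gpoly]
  apply Finset.sum_subset
  · exact Finset.range_subset_range.2 (by omega)
  · intro x hx hx'
    simp only [Finset.mem_range] at hx hx'
    rw [basalLists_empty x m (by omega)]
    simp

open Polynomial in
lemma Gpoly_rec (m : ℕ) (hm : 4 ≤ m) :
    Gpoly m = X * (Gpoly (m-1) + Gpoly (m-2) +
      (if m % 3 = 0 then Gpoly (m-3) else 0)) := by
  have h0 : (basalLists 0 m).card = 0 := rfl
  have key : Gpoly m =
      ∑ d ∈ Finset.range (m+1), ((basalLists (d+1) m).card : Polynomial ℤ) * X ^ (d+1) := by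
    rw [Gpoly_ext m (m+1) (by omega), Finset.sum_range_succ']
    rw [h0]
    simp
  rw [key, Gpoly_ext (m-1) m (by omega), Gpoly_ext (m-2) m (by omega)]
  have hif : (if m % 3 = 0 then Gpoly (m-3) else 0) =
      ∑ d ∈ Finset.range (m+1),
        ((if m % 3 = 0 then (basalLists d (m-3)).card else 0 : ℕ) : Polynomial ℤ) * X ^ d := by
    split
    · exact Gpoly_ext (m-3) m (by omega)
    · simp
  rw [hif, ← Finset.sum_add_distrib, ← Finset.sum_add_distrib, Finset.mul_sum]
  apply Finset.sum_congr rfl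
  intro d _
  rw [cnt_rec d m hm]
  push_cast
  ring

open Polynomial in
lemma Gpoly_base :
    Gpoly 5 = X^2*(1+X)*(1+3*X+X^2)^0 ∧
    Gpoly 6 = X^2*(1+X)^2*(1+3*X+X^2)^0 ∧
    Gpoly 7 = X^3*(1+X)*(2+X)*(1+3*X+X^2)^0 := by
  have c5 : ∀ d, d < 6 → (basalLists d 5).card = [0,0,1,1,0,0].getD d 0 := by decide
  have c6 : ∀ d, d < 7 → (basalLists d 6).card = [0,0,1,2,1,0,0].getD d 0 := by decide
  have c7 : ∀ d, d < 8 → (basalLists d 7).card = [0,0,0,2,3,1,0,0].getD d 0 := by decide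
  refine ⟨?_, ?_, ?_⟩
  · rw [Gpoly]
    simp only [Finset.sum_range_succ, Finset.sum_range_zero,
      c5 0 (by norm_num), c5 1 (by norm_num), c5 2 (by norm_num),
      c5 3 (by norm_num), c5 4 (by norm_num), c5 5 (by norm_num)]
    norm_num
    ring
  · rw [Gpoly]
    simp only [Finset.sum_range_succ, Finset.sum_range_zero,
      c6 0 (by norm_num), c6 1 (by norm_num), c6 2 (by norm_num),
      c6 3 (by norm_num), c6 4 (by norm_num), c6 5 (by norm_num), c6 6 (by norm_num)]
    norm_num
    ring
  · rw [Gpoly]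
    simp only [Finset.sum_range_succ, Finset.sum_range_zero,
      c7 0 (by norm_num), c7 1 (by norm_num), c7 2 (by norm_num),
      c7 3 (by norm_num), c7 4 (by norm_num), c7 5 (by norm_num), c7 6 (by norm_num),
      c7 7 (by norm_num)]
    norm_num
    ring

open Polynomial in
lemma Gpoly_triple : ∀ n : ℕ, 1 ≤ n →
    Gpoly (3*n+2) = X^(n+1)*(1+X)*(1+3*X+X^2)^(n-1) ∧
    Gpoly (3*n+3) = X^(n+1)*(1+X)^2*(1+3*X+X^2)^(n-1) ∧
    Gpoly (3*n+4) = X^(n+2)*(1+X)*(2+X)*(1+3*X+X^2)^(n-1) := by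
  intro n hn
  induction n, hn using Nat.le_induction with
  | base => exact Gpoly_base
  | succ n hn ih =>
    obtain ⟨k, rfl⟩ : ∃ k, n = k + 1 := ⟨n - 1, by omega⟩
    obtain ⟨h2, h3, h4⟩ := ih
    simp only [Nat.add_sub_cancel] at h2 h3 h4 ⊢
    have e5 : Gpoly (3*(k+1+1)+2) = X * (Gpoly (3*(k+1)+4) + Gpoly (3*(k+1)+3) + 0) := by
      have h := Gpoly_rec (3*(k+1)+5) (by omega)
      rw [if_neg (by omega), show 3*(k+1)+5-1 = 3*(k+1)+4 from by omega,
        show 3*(k+1)+5-2 = 3*(k+1)+3 from by omega,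
        show 3*(k+1)+5 = 3*(k+1+1)+2 from by omega] at h
      exact h
    have g5 : Gpoly (3*(k+1+1)+2) = X^(k+1+1+1)*(1+X)*(1+3*X+X^2)^(k+1) := by
      rw [e5, h3, h4]; ring
    have e6 : Gpoly (3*(k+1+1)+3) = X * (Gpoly (3*(k+1+1)+2) + Gpoly (3*(k+1)+4) + Gpoly (3*(k+1)+3)) := by
      have h := Gpoly_rec (3*(k+1)+6) (by omega)
      rw [if_pos (by omega), show 3*(k+1)+6-1 = 3*(k+1+1)+2 from by omega,
        show 3*(k+1)+6-2 = 3*(k+1)+4 from by omega,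
        show 3*(k+1)+6-3 = 3*(k+1)+3 from by omega,
        show 3*(k+1)+6 = 3*(k+1+1)+3 from by omega] at h
      exact h
    have g6 : Gpoly (3*(k+1+1)+3) = X^(k+1+1+1)*(1+X)^2*(1+3*X+X^2)^(k+1) := by
      rw [e6, g5, h3, h4]; ring
    have g7 : Gpoly (3*(k+1+1)+4) = X^(k+1+1+2)*(1+X)*(2+X)*(1+3*X+X^2)^(k+1) := by
      have h := Gpoly_rec (3*(k+1)+7) (by omega)
      rw [if_neg (by omega), show 3*(k+1)+7-1 = 3*(k+1+1)+3 from by omega,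
        show 3*(k+1)+7-2 = 3*(k+1+1)+2 from by omega,
        show 3*(k+1)+7 = 3*(k+1+1)+4 from by omega] at h
      rw [h, g5, g6]; ring
    exact ⟨g5, g6, g7⟩


open Polynomial in
/-- For every `n ≥ 1`, in `ℤ[z]`:
`∑_{d≥1} N(d, 3n+2)·z^d = (z^{n+1} + z^{n+2})·(1 + 3z + z²)^{n−1}`,
where `N(d,m)` is the number of basal `P_{3,2}`-partitions with smallest part
`3`, `d` parts, and largest part `m`; the sum on the left has finitely many
nonzero terms (indeed `N(d, 3n+2) = 0` for `d > 3n+2`), so it may be taken over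
`1 ≤ d ≤ 3n+2`. -/
theorem basalP32_count_generating_polynomial (n : ℕ) (hn : 1 ≤ n) :
    (∀ d : ℕ, 3 * n + 2 < d → basalP32Count d (3 * n + 2) = 0) ∧
    ∑ d ∈ Finset.Icc 1 (3 * n + 2),
        ((basalP32Count d (3 * n + 2) : Polynomial ℤ) * X ^ d) =
      (X ^ (n + 1) + X ^ (n + 2)) * (1 + 3 * X + X ^ 2) ^ (n - 1) := by
  constructor
  · intro d hd
    rw [basalP32Count_eq, basalLists_empty d (3*n+2) (by omega)]
    rfl
  · have hsum : ∑ d ∈ Finset.Icc 1 (3 * n + 2),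
        ((basalP32Count d (3 * n + 2) : Polynomial ℤ) * X ^ d) = Gpoly (3*n+2) := by
      rw [Gpoly]
      apply Finset.sum_subset_zero_on_sdiff
      · intro x hx
        simp only [Finset.mem_Icc, Finset.mem_range] at hx ⊢
        omega
      · intro x hx
        simp only [Finset.mem_sdiff, Finset.mem_range, Finset.mem_Icc] at hx
        have : x = 0 := by omega
        subst this
        simp [show basalLists 0 (3*n+2) = ∅ from rfl]
      · intro x _
        rw [basalP32Count_eq]
    rw [hsum, (Gpoly_triple n hn).1]
    ring
end
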